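/- arXiv:math/0311103 — 3 statements merged into one kernel-verified Lean document; each statement's English description precedes it below -/
import Mathlib

section
/- Goodstein's Theorem: for every natural number m there exists a natural number n ≥ 1 such that the n-th term G(n, m) of the Goodstein sequence of m equals 0. -/
/-- `hsub b u m` substitutes the value `u` for the base `b` throughout the
hereditary base-`b` representation of `m` (with `hsub b u 0 = 0`). -/
def hsub (b u : ℕ) (m : ℕ) : ℕ :=
  if m = 0 then 0
  else
    u ^ hsub b u (Nat.log b m) * (m / b ^ Nat.log b m) + hsub b u (m % b ^ Nat.log b m)
termination_by m
decreasing_by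
  · exact Nat.log_lt_self b (by assumption)
  · have hpos : 0 < b ^ Nat.log b m := by
      rcases Nat.eq_zero_or_pos b with hb | hb
      · simp [hb]
      · exact pow_pos hb _
    exact lt_of_lt_of_le (Nat.mod_lt _ hpos) (Nat.pow_log_le_self b (by assumption))

/-- Goodstein's base-change ("bumping") function: replace the base `b` by `b + 1`
throughout the hereditary base-`b` representation of `m` (with `B b 0 = 0`). -/
def B (b m : ℕ) : ℕ := hsub b (b + 1) m

/-- The Goodstein sequence of `m`: `G 1 m = m`, and `G (k+1) m = B (k+1) (G k m) - 1`
for `k ≥ 1` (truncated subtraction), so the `k`-th term is written in hereditary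
base `k + 1`. -/
def G : ℕ → ℕ → ℕ
  | 0, m => m
  | 1, m => m
  | (k + 2), m => B (k + 2) (G (k + 1) m) - 1

/-- The auxiliary Goodstein-type sequence: `L 1 k = k ^ k` (written in hereditary
base `k`), and `L (n+1) k = B (k+n-1) (L n k) - 1` for `n ≥ 1` (truncated
subtraction), so the `n`-th term is written in hereditary base `k + n - 1`. -/
def L : ℕ → ℕ → ℕ
  | 0, k => k ^ k
  | 1, k => k ^ k
  | (n + 2), k => B (k + n) (L (n + 1) k) - 1

/-- `O b m` is the ordinal obtained by substituting `ω` for the base `b`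
throughout the hereditary base-`b` representation of `m` (with `O b 0 = 0`). -/
noncomputable def O (b : ℕ) (m : ℕ) : Ordinal :=
  if m = 0 then 0
  else
    Ordinal.omega0 ^ O b (Nat.log b m) * ((m / b ^ Nat.log b m : ℕ) : Ordinal)
      + O b (m % b ^ Nat.log b m)
termination_by m
decreasing_by
  · exact Nat.log_lt_self b (by assumption)
  · have hpos : 0 < b ^ Nat.log b m := by
      rcases Nat.eq_zero_or_pos b with hb | hb
      · simp [hb]
      · exact pow_pos hb _
    exact lt_of_lt_of_le (Nat.mod_lt _ hpos) (Nat.pow_log_le_self b (by assumption))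

lemma hsub_zero (b u : ℕ) : hsub b u 0 = 0 := by rw [hsub]; simp

lemma O_zero (b : ℕ) : O.{0} b 0 = 0 := by rw [O]; simp

lemma hsub_eq {b u m : ℕ} (hm : m ≠ 0) :
    hsub b u m =
      u ^ hsub b u (Nat.log b m) * (m / b ^ Nat.log b m) + hsub b u (m % b ^ Nat.log b m) := by
  rw [hsub]; simp [hm]

lemma O_eq {b : ℕ} {m : ℕ} (hm : m ≠ 0) :
    O.{0} b m = Ordinal.omega0 ^ O b (Nat.log b m) * ((m / b ^ Nat.log b m : ℕ) : Ordinal)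
      + O b (m % b ^ Nat.log b m) := by
  rw [O]; simp [hm]

lemma hsub_strong (b u : ℕ) (hb : 2 ≤ b) (hu : b ≤ u) (n : ℕ) :
    (∀ m, m < n → hsub b u m < hsub b u n) ∧
      hsub b u n < u ^ (hsub b u (Nat.log b n) + 1) := by
  induction n using Nat.strong_induction_on with
  | _ n IH =>
  have hu2 : 2 ≤ u := hb.trans hu
  rcases eq_or_ne n 0 with rfl | hn
  · refine ⟨fun m hm => absurd hm (Nat.not_lt_zero m), ?_⟩
    rw [hsub_zero]
    exact Nat.pow_pos (by omega)
  · set l := Nat.log b n with hl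
    set d := n / b ^ l with hd
    set r := n % b ^ l with hr
    have hb1 : 1 < b := hb
    have hln : l < n := Nat.log_lt_self b hn
    have hpow : 0 < b ^ l := Nat.pow_pos (by omega)
    have hble : b ^ l ≤ n := Nat.pow_log_le_self b hn
    have hd1 : 1 ≤ d := (Nat.one_le_div_iff hpow).mpr hble
    have hdb : d < b := by
      rw [hd, Nat.div_lt_iff_lt_mul hpow]
      calc n < b ^ (l + 1) := Nat.lt_pow_succ_log_self hb1 n
      _ = b * b ^ l := by ring
    have hrb : r < b ^ l := Nat.mod_lt _ hpow
    have hrn : r < n := lt_of_lt_of_le hrb hble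
    have heq : hsub b u n = u ^ hsub b u l * d + hsub b u r := hsub_eq hn
    set p := u ^ hsub b u l with hp
    have hppos : 0 < p := Nat.pow_pos (by omega)
    -- generic: anything below b^l maps below p
    have hRgen : ∀ x, x < n → x < b ^ l → hsub b u x < p := by
      intro x hxn hxl
      rcases eq_or_ne x 0 with rfl | hx0
      · rw [hsub_zero]; exact hppos
      · have hlx : Nat.log b x < l := Nat.log_lt_of_lt_pow hx0 hxl
        have h1 : hsub b u x < u ^ (hsub b u (Nat.log b x) + 1) := (IH x hxn).2
        have h2 : hsub b u (Nat.log b x) < hsub b u l := (IH l hln).1 _ hlx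
        exact lt_of_lt_of_le h1 (Nat.pow_le_pow_right (by omega) (by omega))
    have hRr : hsub b u r < p := hRgen r hrn hrb
    constructor
    · intro m hmn
      rcases eq_or_ne m 0 with rfl | hm0
      · rw [hsub_zero]
        have : p * 1 ≤ p * d := Nat.mul_le_mul_left p hd1
        omega
      · set lm := Nat.log b m with hlm
        set dm := m / b ^ lm with hdm
        set rm := m % b ^ lm with hrm
        have hlml : lm ≤ l := Nat.log_mono_right hmn.le
        have heqm : hsub b u m = u ^ hsub b u lm * dm + hsub b u rm := hsub_eq hm0
        rcases lt_or_eq_of_le hlml with hlt | hE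
        · have h1 : hsub b u m < u ^ (hsub b u lm + 1) := (IH m hmn).2
          have h2 : hsub b u lm < hsub b u l := (IH l hln).1 _ hlt
          have h3 : hsub b u m < p := lt_of_lt_of_le h1 (Nat.pow_le_pow_right (by omega) (by omega))
          have : p * 1 ≤ p * d := Nat.mul_le_mul_left p hd1
          omega
        · rw [hE] at heqm hdm hrm
          rw [← hp] at heqm
          have hdmd : dm ≤ d := by rw [hdm, hd]; exact Nat.div_le_div_right hmn.le
          have hrmb : rm < b ^ l := by rw [hrm]; exact Nat.mod_lt _ hpow
          have hrmm : rm ≤ m := by rw [hrm]; exact Nat.mod_le _ _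
          have hRm : hsub b u rm < p := hRgen rm (lt_of_le_of_lt hrmm hmn) hrmb
          rcases lt_or_eq_of_le hdmd with hdd | hdd
          · have : p * (dm + 1) ≤ p * d := Nat.mul_le_mul_left p (by omega)
            rw [Nat.mul_add, Nat.mul_one] at this
            omega
          · have h1 := Nat.div_add_mod m (b ^ l)
            have h2 := Nat.div_add_mod n (b ^ l)
            rw [← hdm, ← hrm] at h1
            rw [← hd, ← hr] at h2
            have hrmr : rm < r := by rw [hdd] at h1; omega
            have := (IH r hrn).1 rm hrmr
            rw [hdd] at heqm
            omega
    · have hdu : d + 1 ≤ u := by omega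
      have : p * (d + 1) ≤ p * u := Nat.mul_le_mul_left p hdu
      rw [Nat.mul_add, Nat.mul_one] at this
      have hps : p * u = u ^ (hsub b u l + 1) := by rw [hp, pow_succ]
      omega

lemma hsub_lt_pow {b u : ℕ} (hb : 2 ≤ b) (hu : b ≤ u) {x l : ℕ} (h : x < b ^ l) :
    hsub b u x < u ^ hsub b u l := by
  rcases eq_or_ne x 0 with rfl | hx0
  · rw [hsub_zero]; exact Nat.pow_pos (by omega)
  · have hlx : Nat.log b x < l := Nat.log_lt_of_lt_pow hx0 h
    have h1 : hsub b u x < u ^ (hsub b u (Nat.log b x) + 1) := (hsub_strong b u hb hu x).2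
    have h2 : hsub b u (Nat.log b x) < hsub b u l := (hsub_strong b u hb hu l).1 _ hlx
    exact lt_of_lt_of_le h1 (Nat.pow_le_pow_right (by omega) (by omega))

open Ordinal in
lemma O_strong (b : ℕ) (hb : 2 ≤ b) (n : ℕ) :
    (∀ m, m < n → O.{0} b m < O b n) ∧ O.{0} b n < Ordinal.omega0 ^ (O b (Nat.log b n) + 1) := by
  induction n using Nat.strong_induction_on with
  | _ n IH =>
  rcases eq_or_ne n 0 with rfl | hn
  · refine ⟨fun m hm => absurd hm (Nat.not_lt_zero m), ?_⟩
    rw [O_zero]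
    exact opow_pos _ omega0_pos
  · set l := Nat.log b n with hl
    set d := n / b ^ l with hd
    set r := n % b ^ l with hr
    have hb1 : 1 < b := hb
    have hln : l < n := Nat.log_lt_self b hn
    have hpow : 0 < b ^ l := Nat.pow_pos (by omega)
    have hble : b ^ l ≤ n := Nat.pow_log_le_self b hn
    have hd1 : 1 ≤ d := (Nat.one_le_div_iff hpow).mpr hble
    have hrb : r < b ^ l := Nat.mod_lt _ hpow
    have hrn : r < n := lt_of_lt_of_le hrb hble
    have heq : O b n = Ordinal.omega0 ^ O b l * (d : Ordinal) + O b r := O_eq hn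
    set p := Ordinal.omega0 ^ O b l with hp
    have hppos : (0 : Ordinal) < p := opow_pos _ omega0_pos
    have hpd : p ≤ p * (d : Ordinal) := by
      calc p = p * 1 := (mul_one p).symm
      _ ≤ p * (d : Ordinal) := by
          exact mul_le_mul_right (by exact_mod_cast hd1) p
    have hRgen : ∀ x, x < n → x < b ^ l → O b x < p := by
      intro x hxn hxl
      rcases eq_or_ne x 0 with rfl | hx0
      · rw [O_zero]; exact hppos
      · have hlx : Nat.log b x < l := Nat.log_lt_of_lt_pow hx0 hxl
        have h1 : O b x < Ordinal.omega0 ^ (O b (Nat.log b x) + 1) := (IH x hxn).2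
        have h2 : O b (Nat.log b x) < O b l := (IH l hln).1 _ hlx
        refine lt_of_lt_of_le h1 (opow_le_opow_right omega0_pos ?_)
        rw [Ordinal.add_one_eq_succ]
        exact Order.succ_le_iff.mpr h2
    have hRr : O b r < p := hRgen r hrn hrb
    have hkey : ∀ e : ℕ, e + 1 ≤ d → p * (e : Ordinal) + p ≤ p * (d : Ordinal) := by
      intro e he
      have : p * ((e : Ordinal) + 1) ≤ p * (d : Ordinal) := by
        refine mul_le_mul_right ?_ p
        have : ((e + 1 : ℕ) : Ordinal.{0}) ≤ (d : Ordinal) := by exact_mod_cast he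
        simpa using this
      calc p * (e : Ordinal) + p = p * ((e : Ordinal) + 1) := by rw [mul_add, mul_one]
      _ ≤ p * (d : Ordinal) := this
    constructor
    · intro m hmn
      rcases eq_or_ne m 0 with rfl | hm0
      · rw [O_zero, heq]
        have h1 : (0 : Ordinal) < p * (d : Ordinal) := lt_of_lt_of_le hppos hpd
        exact lt_of_lt_of_le h1 (self_le_add_right _ _)
      · set lm := Nat.log b m with hlm
        set dm := m / b ^ lm with hdm
        set rm := m % b ^ lm with hrm
        have hlml : lm ≤ l := Nat.log_mono_right hmn.le
        have heqm : O b m = Ordinal.omega0 ^ O b lm * (dm : Ordinal) + O b rm := O_eq hm0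
        rcases lt_or_eq_of_le hlml with hlt | hE
        · have h1 : O b m < Ordinal.omega0 ^ (O b lm + 1) := (IH m hmn).2
          have h2 : O b lm < O b l := (IH l hln).1 _ hlt
          have h3 : Ordinal.omega0 ^ (O b lm + 1) ≤ p := by
            refine opow_le_opow_right omega0_pos ?_
            rw [Ordinal.add_one_eq_succ]
            exact Order.succ_le_iff.mpr h2
          rw [heq]
          exact lt_of_lt_of_le (lt_of_lt_of_le h1 h3)
            (hpd.trans (self_le_add_right _ _))
        · rw [hE] at heqm hdm hrm
          have hdmd : dm ≤ d := by rw [hdm, hd]; exact Nat.div_le_div_right hmn.le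
          have hrmb : rm < b ^ l := by rw [hrm]; exact Nat.mod_lt _ hpow
          have hrmm : rm ≤ m := by rw [hrm]; exact Nat.mod_le _ _
          have hRm : O b rm < p := hRgen rm (lt_of_le_of_lt hrmm hmn) hrmb
          rcases lt_or_eq_of_le hdmd with hdd | hdd
          · rw [heq, heqm, ← hp]
            calc p * (dm : Ordinal) + O b rm < p * (dm : Ordinal) + p := add_lt_add_right hRm _
            _ ≤ p * (d : Ordinal) := hkey dm (by omega)
            _ ≤ p * (d : Ordinal) + O b r := self_le_add_right _ _
          · have h1 := Nat.div_add_mod m (b ^ l)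
            have h2 := Nat.div_add_mod n (b ^ l)
            rw [← hdm, ← hrm] at h1
            rw [← hd, ← hr] at h2
            have hrmr : rm < r := by rw [hdd] at h1; omega
            have h3 := (IH r hrn).1 rm hrmr
            rw [heq, heqm, ← hp, hdd]
            exact add_lt_add_right h3 _
    · rw [heq]
      calc p * (d : Ordinal) + O b r < p * (d : Ordinal) + p := add_lt_add_right hRr _
      _ = p * ((d : Ordinal) + 1) := by rw [mul_add, mul_one]
      _ ≤ p * Ordinal.omega0 := by
          refine mul_le_mul_right (le_of_lt ?_) p
          have : (((d + 1 : ℕ)) : Ordinal) < Ordinal.omega0 := nat_lt_omega0 _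
          simpa using this
      _ = Ordinal.omega0 ^ (O b l + 1) := by rw [opow_add, opow_one]

lemma O_mono {b : ℕ} (hb : 2 ≤ b) {m n : ℕ} (h : m < n) : O.{0} b m < O b n :=
  (O_strong b hb n).1 m h

lemma O_B (b : ℕ) (hb : 2 ≤ b) (m : ℕ) : O.{0} (b + 1) (B b m) = O b m := by
  induction m using Nat.strong_induction_on with
  | _ m IH =>
  rcases eq_or_ne m 0 with rfl | hm
  · show O (b + 1) (hsub b (b + 1) 0) = O b 0
    rw [hsub_zero, O_zero, O_zero]
  · set l := Nat.log b m with hl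
    set d := m / b ^ l with hd
    set r := m % b ^ l with hr
    have hb1 : 1 < b := hb
    have hln : l < m := Nat.log_lt_self b hm
    have hpow : 0 < b ^ l := Nat.pow_pos (by omega)
    have hble : b ^ l ≤ m := Nat.pow_log_le_self b hm
    have hd1 : 1 ≤ d := (Nat.one_le_div_iff hpow).mpr hble
    have hdb : d < b := by
      rw [hd, Nat.div_lt_iff_lt_mul hpow]
      calc m < b ^ (l + 1) := Nat.lt_pow_succ_log_self hb1 m
      _ = b * b ^ l := by ring
    have hrb : r < b ^ l := Nat.mod_lt _ hpow
    have hrm : r < m := lt_of_lt_of_le hrb hble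
    set E := hsub b (b + 1) l with hE
    set R := hsub b (b + 1) r with hR
    have heq : B b m = (b + 1) ^ E * d + R := hsub_eq hm
    set x := B b m with hx
    have hpE : 0 < (b + 1) ^ E := Nat.pow_pos (by omega)
    have hRE : R < (b + 1) ^ E := hsub_lt_pow hb (by omega) hrb
    have hx1 : (b + 1) ^ E ≤ x := by
      have : (b + 1) ^ E * 1 ≤ (b + 1) ^ E * d := Nat.mul_le_mul_left _ hd1
      omega
    have hx2 : x < (b + 1) ^ (E + 1) := by
      have h1 : (b + 1) ^ E * (d + 1) ≤ (b + 1) ^ E * (b + 1) := Nat.mul_le_mul_left _ (by omega)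
      rw [Nat.mul_add, Nat.mul_one] at h1
      have h2 : (b + 1) ^ E * (b + 1) = (b + 1) ^ (E + 1) := (pow_succ _ _).symm
      omega
    have hxne : x ≠ 0 := by omega
    have hlog : Nat.log (b + 1) x = E := Nat.log_eq_of_pow_le_of_lt_pow hx1 hx2
    have hdiv : x / (b + 1) ^ E = d := by
      rw [heq, Nat.mul_add_div hpE, Nat.div_eq_of_lt hRE]
      omega
    have hmod : x % (b + 1) ^ E = R := by
      rw [heq, Nat.mul_add_mod, Nat.mod_eq_of_lt hRE]
    have hOx : O (b + 1) x = Ordinal.omega0 ^ O (b + 1) E * (d : Ordinal) + O (b + 1) R := by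
      rw [O_eq hxne, hlog, hdiv, hmod]
    rw [hOx, show O (b + 1) E = O b l from IH l hln, show O (b + 1) R = O b r from IH r hrm]
    exact (O_eq hm).symm

/-- **Goodstein's Theorem**: for every natural number `m` there exists `n ≥ 1`
such that the `n`-th term of the Goodstein sequence of `m` equals `0`. -/
theorem goodstein_theorem (m : ℕ) : ∃ n : ℕ, 1 ≤ n ∧ G n m = 0 := by
  by_contra h
  push_neg at h
  have hG : ∀ k, G (k + 1) m ≠ 0 := fun k => h (k + 1) (by omega)
  set f : ℕ → Ordinal.{0} := fun k => O.{0} (k + 2) (G (k + 1) m) with hf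
  have hdec : ∀ k, f (k + 1) < f k := by
    intro k
    have hb : 2 ≤ k + 2 := by omega
    have hx : G (k + 1) m ≠ 0 := hG k
    have hBpos : 0 < B (k + 2) (G (k + 1) m) := by
      have h1 := (hsub_strong (k + 2) (k + 3) hb (by omega) (G (k + 1) m)).1 0
        (Nat.pos_of_ne_zero hx)
      rw [hsub_zero] at h1
      exact h1
    have hstep : G (k + 2) m = B (k + 2) (G (k + 1) m) - 1 := rfl
    calc f (k + 1) = O (k + 3) (B (k + 2) (G (k + 1) m) - 1) := by
          show O (k + 1 + 2) (G (k + 1 + 1) m) = _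
          rw [show k + 1 + 1 = k + 2 from rfl, hstep]
    _ < O (k + 3) (B (k + 2) (G (k + 1) m)) :=
          O_mono (by omega) (Nat.sub_lt hBpos one_pos)
    _ = O (k + 2) (G (k + 1) m) := O_B (k + 2) hb _
    _ = f k := rfl
  obtain ⟨a, ⟨k, hk⟩, hmin⟩ := Ordinal.lt_wf.has_min (Set.range f) ⟨f 0, 0, rfl⟩
  exact hmin (f (k + 1)) ⟨k + 1, rfl⟩ (hk ▸ hdec k)
end

section
/- Lemma 2: for all natural numbers m and k ≥ 1, if the hereditary base-(k+1) representation of G(k, m) contains more than one nonzero term (i.e., at least two distinct exponents occur with nonzero coefficient), then G(k+1, m) ≥ G(k, m). -/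
theorem hsub_ge (b : ℕ) (hb : 2 ≤ b) : ∀ m, m ≤ hsub b (b + 1) m := by
  intro m
  induction m using Nat.strong_induction_on with
  | _ m ih =>
    rcases Nat.eq_zero_or_pos m with h0 | h0
    · simp [h0, hsub]
    · rw [hsub, if_neg h0.ne']
      set e := Nat.log b m with he
      have hple : b ^ e ≤ m := Nat.pow_log_le_self b h0.ne'
      have hpe : 0 < b ^ e := by positivity
      have h1 : e ≤ hsub b (b + 1) e := ih e (Nat.log_lt_self b h0.ne')
      have h2 : m % b ^ e ≤ hsub b (b + 1) (m % b ^ e) :=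
        ih _ (lt_of_lt_of_le (Nat.mod_lt _ hpe) hple)
      have h3 : b ^ e ≤ (b + 1) ^ hsub b (b + 1) e :=
        le_trans (Nat.pow_le_pow_left (by omega) e)
          (Nat.pow_le_pow_right (by omega) h1)
      calc m = b ^ e * (m / b ^ e) + m % b ^ e := (Nat.div_add_mod m (b ^ e)).symm
        _ ≤ (b + 1) ^ hsub b (b + 1) e * (m / b ^ e) + hsub b (b + 1) (m % b ^ e) :=
          Nat.add_le_add (Nat.mul_le_mul_right _ h3) h2

theorem hsub_gt (b : ℕ) (hb : 2 ≤ b) (m : ℕ) (hm : b ≤ m) : m < hsub b (b + 1) m := by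
  have h0 : m ≠ 0 := by omega
  rw [hsub, if_neg h0]
  set e := Nat.log b m with he
  have hepos : 0 < e := Nat.log_pos (by omega) hm
  have hple : b ^ e ≤ m := Nat.pow_log_le_self b h0
  have hpe : 0 < b ^ e := by positivity
  have h1 : e ≤ hsub b (b + 1) e := hsub_ge b hb e
  have h2 : m % b ^ e ≤ hsub b (b + 1) (m % b ^ e) := hsub_ge b hb _
  have h3 : b ^ e < (b + 1) ^ hsub b (b + 1) e :=
    lt_of_lt_of_le (Nat.pow_lt_pow_left (by omega) (by omega))
      (Nat.pow_le_pow_right (by omega) h1)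
  have ha : 1 ≤ m / b ^ e := Nat.one_le_div_iff hpe |>.mpr hple
  calc m = b ^ e * (m / b ^ e) + m % b ^ e := (Nat.div_add_mod m (b ^ e)).symm
    _ < (b + 1) ^ hsub b (b + 1) e * (m / b ^ e) + hsub b (b + 1) (m % b ^ e) :=
      Nat.add_lt_add_of_lt_of_le (Nat.mul_lt_mul_of_lt_of_le h3 (le_refl _) (by omega)) h2

/-- **Lemma 2**: for `k ≥ 1`, if the hereditary base-`(k+1)` representation of
`G k m` contains more than one nonzero term (at least two distinct exponents
occur with nonzero coefficient), then `G (k+1) m ≥ G k m`. -/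
theorem goodstein_lemma2 (m k : ℕ) (hk : 1 ≤ k)
    (h : ∃ i j : ℕ, i ≠ j ∧ (G k m / (k + 1) ^ i) % (k + 1) ≠ 0 ∧
      (G k m / (k + 1) ^ j) % (k + 1) ≠ 0) :
    G k m ≤ G (k + 1) m := by
  obtain ⟨i, j, hij, hi, hj⟩ := h
  obtain ⟨k', rfl⟩ : ∃ k', k = k' + 1 := ⟨k - 1, by omega⟩
  set n := G (k' + 1) m with hn
  have key : ∀ e, 1 ≤ e → (n / (k' + 2) ^ e) % (k' + 2) ≠ 0 → k' + 2 ≤ n := by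
    intro e he hne
    have h1 : 1 ≤ n / (k' + 2) ^ e := by
      rcases Nat.eq_zero_or_pos (n / (k' + 2) ^ e) with h | h
      · simp [h] at hne
      · exact h
    have h2 : 1 * (k' + 2) ^ e ≤ n :=
      (Nat.le_div_iff_mul_le (by positivity)).mp h1
    have h3 : k' + 2 ≤ (k' + 2) ^ e := Nat.le_self_pow (by omega) _
    omega
  have hge : k' + 2 ≤ n := by
    rcases Nat.lt_or_ge i j with hlt | hge'
    · exact key j (by omega) hj
    · exact key i (by omega) hi
  have hbump : n < hsub (k' + 2) (k' + 3) n := hsub_gt (k' + 2) (by omega) n hge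
  have hG : G (k' + 1 + 1) m = B (k' + 2) n - 1 := rfl
  rw [hG]
  have : B (k' + 2) n = hsub (k' + 2) (k' + 3) n := rfl
  omega
end

section
/- Second Goodstein sequence theorem: for every natural number m, the Goodstein sequence G(m) reaches 0 (i.e., there exists n ≥ 1 with G(n, m) = 0) if and only if it is finitely bounded (i.e., there exists a natural number C such that G(n, m) ≤ C for all n ≥ 1). -/
lemma hsub_of_lt {b m : ℕ} (u : ℕ) (h : m < b) : hsub b u m = m := by
  rcases Nat.eq_zero_or_pos m with rfl | hm
  · exact hsub_zero b u
  · have hlog : Nat.log b m = 0 := Nat.log_eq_zero_iff.mpr (Or.inl h)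
    rw [hsub]
    simp [hm.ne', hlog, Nat.mod_one, hsub_zero]

lemma B_zero (b : ℕ) : B b 0 = 0 := hsub_zero b (b + 1)

lemma B_of_lt {b m : ℕ} (h : m < b) : B b m = m := hsub_of_lt (b + 1) h

lemma G_succ (m k : ℕ) (hk : 1 ≤ k) : G (k + 1) m = B (k + 1) (G k m) - 1 := by
  obtain ⟨j, rfl⟩ : ∃ j, k = j + 1 := ⟨k - 1, by omega⟩
  rfl

/-- **Second Goodstein sequence theorem**: for every natural number `m`, the
Goodstein sequence of `m` reaches `0` if and only if it is finitely bounded. -/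
theorem second_goodstein_sequence_theorem (m : ℕ) :
    (∃ n : ℕ, 1 ≤ n ∧ G n m = 0) ↔ (∃ C : ℕ, ∀ n : ℕ, 1 ≤ n → G n m ≤ C) := by
  constructor
  · rintro ⟨n, hn, h0⟩
    have stays : ∀ j, G (n + j) m = 0 := by
      intro j
      induction j with
      | zero => simpa using h0
      | succ j ih =>
        have : G (n + j + 1) m = B (n + j + 1) (G (n + j) m) - 1 :=
          G_succ m (n + j) (by omega)
        rw [show n + (j + 1) = n + j + 1 by ring, this, ih, B_zero]
    refine ⟨(Finset.range (n + 1)).sup (fun i => G i m), fun j hj => ?_⟩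
    rcases le_or_gt j n with hle | hlt
    · exact Finset.le_sup (f := fun i => G i m) (Finset.mem_range.mpr (by omega))
    · have := stays (j - n)
      rw [show n + (j - n) = j by omega] at this
      simp [this]
  · rintro ⟨C, hC⟩
    have key : ∀ j, G (C + 1 + j) m = G (C + 1) m - j := by
      intro j
      induction j with
      | zero => simp
      | succ j ih =>
        have hb : G (C + 1 + j) m < C + 1 + j + 1 :=
          lt_of_le_of_lt (hC _ (by omega)) (by omega)
        have : G (C + 1 + j + 1) m = B (C + 1 + j + 1) (G (C + 1 + j) m) - 1 :=
          G_succ m (C + 1 + j) (by omega)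
        rw [show C + 1 + (j + 1) = C + 1 + j + 1 by ring, this, B_of_lt hb, ih]
        omega
    refine ⟨C + 1 + G (C + 1) m, by omega, ?_⟩
    rw [key]
    omega
end
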